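/- If S is admissible and 2 ∈ S, then #P_B(S,n) = #\widehat{P}_B(S,n). -/

import Mathlib

open Finset

/-- Value at (1-indexed) position `i` of the signed permutation represented by a pair
`(σ, ε)`: the value is `±(σ(i)+1)`, negative iff `ε i = true`. Returns 0 out of range. -/
def bval (n : ℕ) (π : Equiv.Perm (Fin n) × (Fin n → Bool)) (i : ℕ) : ℤ :=
  if h : i - 1 < n then
    (if π.2 ⟨i - 1, h⟩ then (-1 : ℤ) else 1) * (((π.1 ⟨i - 1, h⟩ : ℕ) : ℤ) + 1)
  else 0

/-- Peak set of a signed permutation: positions `i ∈ {2,…,n-1}` with `π_{i-1} < π_i > π_{i+1}`. -/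
def bPeakSet (n : ℕ) (π : Equiv.Perm (Fin n) × (Fin n → Bool)) : Finset ℕ :=
  (Finset.Icc 2 (n - 1)).filter fun i =>
    bval n π (i - 1) < bval n π i ∧ bval n π (i + 1) < bval n π i

/-- `#P_B(S,n)`: number of signed permutations in `B_n` with peak set exactly `S`. -/
def PB (n : ℕ) (S : Finset ℕ) : ℕ :=
  (Finset.univ.filter fun π : Equiv.Perm (Fin n) × (Fin n → Bool) => bPeakSet n π = S).card

/-- Value with the convention `π_0 = 0`. -/
def bvalHat (n : ℕ) (π : Equiv.Perm (Fin n) × (Fin n → Bool)) (i : ℕ) : ℤ :=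
  if i = 0 then 0 else bval n π i

/-- Peak set with `π_0 = 0`: positions `i ∈ {1,…,n-1}` with `π_{i-1} < π_i > π_{i+1}`. -/
def bPeakSetHat (n : ℕ) (π : Equiv.Perm (Fin n) × (Fin n → Bool)) : Finset ℕ :=
  (Finset.Icc 1 (n - 1)).filter fun i =>
    bvalHat n π (i - 1) < bvalHat n π i ∧ bvalHat n π (i + 1) < bvalHat n π i

/-- `#P̂_B(S,n)`: signed permutations with `π_0 = 0` prepended and peak set exactly `S`. -/
def PBhat (n : ℕ) (S : Finset ℕ) : ℕ :=
  (Finset.univ.filter fun π : Equiv.Perm (Fin n) × (Fin n → Bool) => bPeakSetHat n π = S).card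

/-- Value at (1-indexed) position `i` of an ordinary permutation of `{1,…,n}`. -/
def sval (n : ℕ) (π : Equiv.Perm (Fin n)) (i : ℕ) : ℤ :=
  if h : i - 1 < n then ((π ⟨i - 1, h⟩ : ℕ) : ℤ) + 1 else 0

/-- Peak set of an ordinary permutation: positions `i ∈ {2,…,n-1}`. -/
def sPeakSet (n : ℕ) (π : Equiv.Perm (Fin n)) : Finset ℕ :=
  (Finset.Icc 2 (n - 1)).filter fun i =>
    sval n π (i - 1) < sval n π i ∧ sval n π (i + 1) < sval n π i

/-- `#P(S,n)`: number of permutations of `{1,…,n}` with peak set exactly `S`. -/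
def PP (n : ℕ) (S : Finset ℕ) : ℕ :=
  (Finset.univ.filter fun π : Equiv.Perm (Fin n) => sPeakSet n π = S).card

def svalHat (n : ℕ) (π : Equiv.Perm (Fin n)) (i : ℕ) : ℤ :=
  if i = 0 then 0 else sval n π i

/-- Peak set with the convention `π_0 = 0`: positions `i ∈ {1,…,n-1}`. -/
def sPeakSetHat (n : ℕ) (π : Equiv.Perm (Fin n)) : Finset ℕ :=
  (Finset.Icc 1 (n - 1)).filter fun i =>
    svalHat n π (i - 1) < svalHat n π i ∧ svalHat n π (i + 1) < svalHat n π i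

/-- `#P̂(S,n)`: permutations of `{1,…,n}` with `π_0 = 0` prepended and peak set exactly `S`. -/
def PPhat (n : ℕ) (S : Finset ℕ) : ℕ :=
  (Finset.univ.filter fun π : Equiv.Perm (Fin n) => sPeakSetHat n π = S).card

/-- if `2 ∈ S` then `#P_B(S,n) = #P̂_B(S,n)`. -/
lemma hatEq (n : ℕ) (π : Equiv.Perm (Fin n) × (Fin n → Bool))
    (h : bval n π 1 < bval n π 2) : bPeakSetHat n π = bPeakSet n π := by
  ext i
  simp only [bPeakSetHat, bPeakSet, Finset.mem_filter, Finset.mem_Icc]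
  simp only [bvalHat]
  match i with
  | 0 => simp
  | 1 =>
    constructor
    · rintro ⟨⟨_, _⟩, _, hb⟩
      norm_num at hb
      omega
    · rintro ⟨⟨h1, _⟩, _⟩; omega
  | (i+2) =>
    have h1 : i + 2 - 1 ≠ 0 := by omega
    have h2' : i + 2 ≠ 0 := by omega
    have h3 : i + 2 + 1 ≠ 0 := by omega
    simp only [if_neg h1, if_neg h2', if_neg h3]
    constructor
    · rintro ⟨⟨_, hu⟩, hc⟩; exact ⟨⟨by omega, hu⟩, hc⟩
    · rintro ⟨⟨_, hu⟩, hc⟩; exact ⟨⟨by omega, hu⟩, hc⟩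

theorem stmt12 (n : ℕ) (S : Finset ℕ)
    (hS : S ⊆ Finset.Icc 1 (n - 1)) (hcons : ∀ i ∈ S, i + 1 ∉ S) (h2 : 2 ∈ S) :
    PB n S = PBhat n S := by
  unfold PB PBhat
  congr 1
  apply Finset.filter_congr
  intro π _
  constructor
  · intro h
    have hm : 2 ∈ bPeakSet n π := h ▸ h2
    simp only [bPeakSet, Finset.mem_filter] at hm
    rw [hatEq n π (by simpa using hm.2.1), h]
  · intro h
    have hm : 2 ∈ bPeakSetHat n π := h ▸ h2
    simp only [bPeakSetHat, Finset.mem_filter] at hm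
    simp only [bvalHat] at hm
    have hlt : bval n π 1 < bval n π 2 := by
      have := hm.2.1
      simpa using this
    rw [← hatEq n π hlt, h]
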